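/- For every N ≥ 3 and every real u ≥ 0, let ρ_{1,2} be the two-qubit reduced density matrix of ψ_N^{(1)}(u) obtained by tracing out qubits 3,…,N. Then the determinant of the partial transpose of ρ_{1,2} with respect to the first qubit equals −[N(1+Nu²)]^{−4}; in particular it is strictly negative, so ρ_{1,2} is entangled and ψ_N^{(1)}(u) is robust with respect to the loss of any N−2 qubits. -/

import Mathlib

open scoped BigOperators ComplexConjugate

noncomputable section

/-- A single-qubit unit vector in `ℂ²`. -/
def IsUnitQubit (e : Fin 2 → ℂ) : Prop := ∑ j, Complex.normSq (e j) = 1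

/-- Norm-one condition for a multiqubit vector on the register `ι`. -/
def IsUnitState {ι : Type*} [Fintype ι] [DecidableEq ι] (ψ : (ι → Fin 2) → ℂ) : Prop :=
  ∑ x, Complex.normSq (ψ x) = 1

/-- The product state `⊗ᵢ eᵢ`. -/
def prodState {ι : Type*} [Fintype ι] (e : ι → Fin 2 → ℂ) : (ι → Fin 2) → ℂ :=
  fun x => ∏ i, e i (x i)

/-- A pure state is a product state if it is a tensor product of single-qubit unit vectors. -/
def IsProductState {ι : Type*} [Fintype ι] (ψ : (ι → Fin 2) → ℂ) : Prop :=
  ∃ e : ι → Fin 2 → ℂ, (∀ i, IsUnitQubit (e i)) ∧ ψ = prodState e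

/-- A pure state is entangled if it is not a product state. -/
def IsEntangledState {ι : Type*} [Fintype ι] (ψ : (ι → Fin 2) → ℂ) : Prop :=
  ¬ IsProductState ψ

/-- The projector `|v⟩⟨v|` as a matrix. -/
def proj {α : Type*} (v : α → ℂ) : Matrix α α ℂ :=
  Matrix.of fun x y => v x * conj (v y)

/-- A density matrix on the qubit register `ι` is separable if it is a finite convex
combination of projectors onto product states (and entangled otherwise). -/
def IsSeparableDensity {ι : Type*} [Fintype ι] (ρ : Matrix (ι → Fin 2) (ι → Fin 2) ℂ) : Prop :=
  ∃ (n : ℕ) (w : Fin n → ℝ) (e : Fin n → ι → Fin 2 → ℂ),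
    (∀ m, 0 ≤ w m) ∧ (∑ m, w m = 1) ∧ (∀ m i, IsUnitQubit (e m i)) ∧
    ρ = ∑ m, (w m : ℂ) • proj (prodState (e m))

/-- Assemble a full assignment of the `N` qubits from an assignment `x` of the qubits outside
`S` and an assignment `z` of the qubits in `S`. -/
def mergeCompl {N : ℕ} (S : Finset (Fin N)) (x : {i : Fin N // i ∉ S} → Fin 2)
    (z : {i : Fin N // i ∈ S} → Fin 2) : Fin N → Fin 2 :=
  fun i => if h : i ∈ S then z ⟨i, h⟩ else x ⟨i, h⟩

/-- The reduced density operator `ρ_{¬S}(ψ)`: the partial trace of `|ψ⟩⟨ψ|` over the qubits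
in `S`. -/
def reducedState {N : ℕ} (ψ : (Fin N → Fin 2) → ℂ) (S : Finset (Fin N)) :
    Matrix ({i : Fin N // i ∉ S} → Fin 2) ({i : Fin N // i ∉ S} → Fin 2) ℂ :=
  Matrix.of fun x y => ∑ z : {i : Fin N // i ∈ S} → Fin 2,
    ψ (mergeCompl S x z) * conj (ψ (mergeCompl S y z))

/-- The `W`-type Dicke state `|D_N^{(1)}⟩`. -/
def dickeW (N : ℕ) : (Fin N → Fin 2) → ℂ :=
  fun x => if (∑ i, ((x i : ℕ))) = 1 then ((1 / Real.sqrt N : ℝ) : ℂ) else 0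

/-- The normalized state `ψ_N^{(1)}(u) = (√N u |0…0⟩ + |D_N^{(1)}⟩)/√(1 + N u²)`. -/
def psiW (N : ℕ) (u : ℝ) : (Fin N → Fin 2) → ℂ :=
  fun x => (((Real.sqrt N * u : ℝ) : ℂ) * (if (∀ i, x i = 0) then 1 else 0) + dickeW N x)
    / ((Real.sqrt (1 + N * u ^ 2) : ℝ) : ℂ)

/-- Reassemble a full `N`-qubit assignment from an assignment `v` of the first two qubits and
an assignment `z` of the qubits `3, …, N`. -/
def extendFirstTwo {N : ℕ} (v : Fin 2 → Fin 2) (z : {i : Fin N // 2 ≤ (i : ℕ)} → Fin 2) :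
    Fin N → Fin 2 :=
  fun i => if h : (i : ℕ) < 2 then v ⟨(i : ℕ), h⟩ else z ⟨i, by omega⟩

/-- The two-qubit reduced density matrix of `ψ` obtained by tracing out qubits `3, …, N`. -/
def rhoFirstTwo {N : ℕ} (ψ : (Fin N → Fin 2) → ℂ) :
    Matrix (Fin 2 → Fin 2) (Fin 2 → Fin 2) ℂ :=
  Matrix.of fun v w => ∑ z : {i : Fin N // 2 ≤ (i : ℕ)} → Fin 2,
    ψ (extendFirstTwo v z) * conj (ψ (extendFirstTwo w z))

/-- The partial transpose of a two-qubit density matrix with respect to the first qubit: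
`ρ^{T₁}_{(i,j),(k,l)} = ρ_{(k,j),(i,l)}`. -/
def ptransposeFirst (ρ : Matrix (Fin 2 → Fin 2) (Fin 2 → Fin 2) ℂ) :
    Matrix (Fin 2 → Fin 2) (Fin 2 → Fin 2) ℂ :=
  Matrix.of fun v w => ρ ![w 0, v 1] ![v 0, w 1]

namespace PsiWAux

/-- Hamming weight of an assignment. -/
def wt {ι : Type*} [Fintype ι] (x : ι → Fin 2) : ℕ := ∑ i, ((x i : ℕ))

def gW (N : ℕ) (u : ℝ) (k : ℕ) : ℝ :=
  (if k = 0 then Real.sqrt N * u else if k = 1 then 1 / Real.sqrt N else 0)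
    / Real.sqrt (1 + N * u ^ 2)

lemma gW_eq_zero {N : ℕ} {u : ℝ} {k : ℕ} (hk : 2 ≤ k) : gW N u k = 0 := by
  unfold gW
  rw [if_neg (by omega), if_neg (by omega), zero_div]

def matEnt (N : ℕ) (u : ℝ) (j k : ℕ) : ℂ :=
  ((gW N u j : ℝ) : ℂ) * ((gW N u k : ℝ) : ℂ)
    + ((N - 2 : ℕ) : ℂ) * (((gW N u (j+1) : ℝ) : ℂ) * ((gW N u (k+1) : ℝ) : ℂ))

lemma matEnt_zero {N : ℕ} {u : ℝ} {j k : ℕ} (h : 2 ≤ j ∨ 2 ≤ k) : matEnt N u j k = 0 := by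
  rcases h with h | h
  · simp [matEnt, gW_eq_zero h, gW_eq_zero (show 2 ≤ j + 1 by omega)]
  · simp [matEnt, gW_eq_zero h, gW_eq_zero (show 2 ≤ k + 1 by omega)]

lemma psiW_apply {N : ℕ} (u : ℝ) (x : Fin N → Fin 2) :
    psiW N u x = ((gW N u (wt x) : ℝ) : ℂ) := by
  have hx : (∀ i, x i = 0) ↔ wt x = 0 := by
    rw [wt, Finset.sum_eq_zero_iff]
    constructor
    · intro h i _; rw [h i]; rfl
    · intro h i
      have := h i (Finset.mem_univ i)
      exact Fin.ext (by omega)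
  by_cases h0 : wt x = 0
  · have hs : (∑ i, ((x i : ℕ))) = 0 := h0
    have hall : ∀ i, x i = 0 := hx.mpr h0
    simp [psiW, dickeW, gW, hs, hall, h0]
  · by_cases h1 : wt x = 1
    · have hs : (∑ i, ((x i : ℕ))) = 1 := h1
      have hnall : ¬ (∀ i, x i = 0) := fun h => h0 (hx.mp h)
      simp [psiW, dickeW, gW, hs, hnall, h1, h0]
    · have hs : ¬ (∑ i, ((x i : ℕ))) = 1 := h1
      have hnall : ¬ (∀ i, x i = 0) := fun h => h0 (hx.mp h)
      simp [psiW, dickeW, gW, hs, hnall, h1, h0]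

end PsiWAux
namespace PsiWAux

lemma sum_weight_fin (m : ℕ) (F : ℕ → ℂ) (hF : ∀ j, 2 ≤ j → F j = 0) :
    ∑ z : Fin m → Fin 2, F (∑ i, ((z i : ℕ))) = F 0 + m * F 1 := by
  induction m generalizing F with
  | zero => simp
  | succ m ih =>
    rw [← (Fin.consEquiv (fun _ : Fin (m+1) => Fin 2)).sum_comp
        (fun z => F (∑ i, ((z i : ℕ))))]
    rw [Fintype.sum_prod_type]
    have hinner : ∀ (a : Fin 2) (z : Fin m → Fin 2),
        (∑ i : Fin (m+1), (((Fin.consEquiv (fun _ : Fin (m+1) => Fin 2)) (a, z) i : ℕ))) =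
          (a : ℕ) + ∑ i : Fin m, ((z i : ℕ)) := by
      intro a z
      rw [Fin.sum_univ_succ]
      simp [Fin.consEquiv]
    simp only [hinner]
    rw [Fin.sum_univ_two]
    have h0 : ((0 : Fin 2) : ℕ) = 0 := rfl
    have h1 : ((1 : Fin 2) : ℕ) = 1 := rfl
    rw [h0, h1]
    have e0 := ih F hF
    have e1 := ih (fun j => F (1 + j)) (fun j hj => hF _ (by omega))
    simp only [zero_add]
    rw [e0, e1]
    simp only [show (1:ℕ)+1 = 2 from rfl, show (1:ℕ)+0 = 1 from rfl, hF 2 (by omega)]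
    push_cast
    ring

lemma sum_weight {ι : Type*} [Fintype ι] [DecidableEq ι] (F : ℕ → ℂ) (hF : ∀ j, 2 ≤ j → F j = 0) :
    ∑ z : ι → Fin 2, F (∑ i, ((z i : ℕ))) = F 0 + (Fintype.card ι) * F 1 := by
  classical
  set n := Fintype.card ι with hn
  let e := Fintype.equivFin ι
  let E : (Fin n → Fin 2) ≃ (ι → Fin 2) :=
    { toFun := fun z => fun i => z (e i)
      invFun := fun y => fun j => y (e.symm j)
      left_inv := fun z => by funext j; simp
      right_inv := fun y => by funext i; simp }
  rw [← E.sum_comp (fun z => F (∑ i, ((z i : ℕ))))]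
  have h1 : ∀ z : Fin n → Fin 2, (∑ i : ι, ((E z i : ℕ))) = ∑ j, ((z j : ℕ)) := by
    intro z
    exact Equiv.sum_comp e (fun j => ((z j : ℕ)))
  simp only [h1]
  exact sum_weight_fin n F hF

end PsiWAux
namespace PsiWAux

lemma wt_merge {N : ℕ} (S : Finset (Fin N)) (x : {i : Fin N // i ∉ S} → Fin 2)
    (z : {i : Fin N // i ∈ S} → Fin 2) :
    wt (mergeCompl S x z) = wt x + wt z := by
  classical
  unfold wt
  rw [← Finset.sum_filter_add_sum_filter_not Finset.univ (fun i => i ∈ S)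
    (fun i => ((mergeCompl S x z i : ℕ)))]
  have hS : ∑ i ∈ Finset.univ.filter (fun i => i ∈ S), ((mergeCompl S x z i : ℕ))
      = ∑ i : {i : Fin N // i ∈ S}, ((z i : ℕ)) := by
    rw [Finset.sum_subtype (Finset.univ.filter (fun i => i ∈ S))
      (show ∀ i : Fin N, i ∈ Finset.univ.filter (fun i => i ∈ S) ↔ i ∈ S by
        intro i; simp) (fun i => ((mergeCompl S x z i : ℕ)))]
    refine Finset.sum_congr rfl fun i _ => ?_
    simp [mergeCompl, i.2]
  have hSc : ∑ i ∈ Finset.univ.filter (fun i => ¬ i ∈ S), ((mergeCompl S x z i : ℕ))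
      = ∑ i : {i : Fin N // i ∉ S}, ((x i : ℕ)) := by
    rw [Finset.sum_subtype (Finset.univ.filter (fun i => ¬ i ∈ S))
      (show ∀ i : Fin N, i ∈ Finset.univ.filter (fun i => ¬ i ∈ S) ↔ i ∉ S by
        intro i; simp) (fun i => ((mergeCompl S x z i : ℕ)))]
    refine Finset.sum_congr rfl fun i _ => ?_
    simp [mergeCompl, i.2]
  rw [hS, hSc]
  ring

def firstTwoEquiv (N : ℕ) (hN : 3 ≤ N) : Fin 2 ≃ {i : Fin N // (i : ℕ) < 2} where
  toFun := fun j => ⟨⟨(j : ℕ), by omega⟩, by simpa using j.2⟩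
  invFun := fun s => ⟨(s.1 : ℕ), s.2⟩
  left_inv := fun j => by ext; simp
  right_inv := fun s => by ext; simp

lemma wt_extend {N : ℕ} (hN : 3 ≤ N) (v : Fin 2 → Fin 2)
    (z : {i : Fin N // 2 ≤ (i : ℕ)} → Fin 2) :
    wt (extendFirstTwo v z) = wt v + wt z := by
  classical
  unfold wt
  rw [← Finset.sum_filter_add_sum_filter_not Finset.univ (fun i : Fin N => (i : ℕ) < 2)
    (fun i => ((extendFirstTwo v z i : ℕ)))]
  have hlt : ∑ i ∈ Finset.univ.filter (fun i : Fin N => (i : ℕ) < 2),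
      ((extendFirstTwo v z i : ℕ)) = ∑ j : Fin 2, ((v j : ℕ)) := by
    rw [Finset.sum_subtype (Finset.univ.filter (fun i : Fin N => (i : ℕ) < 2))
      (show ∀ i : Fin N, i ∈ Finset.univ.filter (fun i : Fin N => (i : ℕ) < 2) ↔ (i : ℕ) < 2 by
        intro i; simp) (fun i => ((extendFirstTwo v z i : ℕ)))]
    rw [← Equiv.sum_comp (firstTwoEquiv N hN) (fun s => ((extendFirstTwo v z s.1 : ℕ)))]
    refine Finset.sum_congr rfl fun j _ => ?_
    have hj : ((j : ℕ)) < 2 := j.2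
    simp [firstTwoEquiv, extendFirstTwo, hj, Fin.eta]
  have hge : ∑ i ∈ Finset.univ.filter (fun i : Fin N => ¬ (i : ℕ) < 2),
      ((extendFirstTwo v z i : ℕ)) = ∑ j : {i : Fin N // 2 ≤ (i : ℕ)}, ((z j : ℕ)) := by
    rw [Finset.sum_subtype (Finset.univ.filter (fun i : Fin N => ¬ (i : ℕ) < 2))
      (show ∀ i : Fin N, i ∈ Finset.univ.filter (fun i : Fin N => ¬ (i : ℕ) < 2) ↔ 2 ≤ (i : ℕ) by
        intro i; simp; omega) (fun i => ((extendFirstTwo v z i : ℕ)))]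
    refine Finset.sum_congr rfl fun s _ => ?_
    have hs : ¬ ((s.1 : ℕ) < 2) := by omega
    simp only [extendFirstTwo, hs, dif_neg, not_false_iff]
  rw [hlt, hge]

end PsiWAux
namespace PsiWAux

lemma card_ge_two {N : ℕ} (hN : 3 ≤ N) :
    Fintype.card {i : Fin N // 2 ≤ (i : ℕ)} = N - 2 := by
  classical
  have h1 : Fintype.card {i : Fin N // (i : ℕ) < 2} = 2 :=
    (Fintype.card_congr (firstTwoEquiv N hN).symm).trans (by simp)
  have h2 : Fintype.card {i : Fin N // 2 ≤ (i : ℕ)}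
      = Fintype.card {i : Fin N // ¬ (i : ℕ) < 2} :=
    Fintype.card_congr (Equiv.subtypeEquivRight (fun i => by omega))
  rw [h2, Fintype.card_subtype_compl, h1, Fintype.card_fin]

lemma entry_eq {N : ℕ} (hN : 3 ≤ N) (u : ℝ) {ι κ : Type*} [Fintype ι]
    [Fintype κ] [DecidableEq κ]
    (hκ : Fintype.card κ = N - 2)
    (ext : (ι → Fin 2) → (κ → Fin 2) → (Fin N → Fin 2))
    (hext : ∀ v z, wt (ext v z) = wt v + (∑ i, ((z i : ℕ))))
    (v w : ι → Fin 2) :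
    (∑ z : κ → Fin 2, psiW N u (ext v z) * conj (psiW N u (ext w z)))
      = matEnt N u (wt v) (wt w) := by
  have hterm : ∀ z : κ → Fin 2,
      psiW N u (ext v z) * conj (psiW N u (ext w z))
        = (fun k => (((gW N u (wt v + k) * gW N u (wt w + k) : ℝ)) : ℂ)) (∑ i, ((z i : ℕ))) := by
    intro z
    rw [psiW_apply, psiW_apply, hext v z, hext w z, Complex.conj_ofReal]
    push_cast
    ring
  rw [Finset.sum_congr rfl (fun z _ => hterm z)]
  have := sum_weight (ι := κ)
    (fun k => (((gW N u (wt v + k) * gW N u (wt w + k) : ℝ)) : ℂ))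
    (fun j hj => by
      simp only [gW_eq_zero (show 2 ≤ wt v + j by omega), zero_mul, Complex.ofReal_zero])
  rw [this, hκ, matEnt]
  push_cast
  ring

lemma rho_eq {N : ℕ} (hN : 3 ≤ N) (u : ℝ) :
    rhoFirstTwo (psiW N u) = Matrix.of fun v w => matEnt N u (wt v) (wt w) := by
  ext v w
  exact entry_eq hN u (card_ge_two hN) extendFirstTwo
    (fun v z => wt_extend hN v z) v w

lemma reduced_eq {N : ℕ} (hN : 3 ≤ N) (u : ℝ) (S : Finset (Fin N)) (hS : S.card = N - 2) :
    reducedState (psiW N u) S = Matrix.of fun x y => matEnt N u (wt x) (wt y) := by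
  classical
  ext x y
  refine entry_eq hN u ?_ (fun x z => mergeCompl S x z) (fun x z => wt_merge S x z) x y
  simpa using hS

end PsiWAux
namespace PsiWAux

def E4 : (Fin 2 → Fin 2) ≃ Fin 4 where
  toFun z := ⟨2 * (z 0 : ℕ) + (z 1 : ℕ), by
    have h0 := (z 0).isLt; have h1 := (z 1).isLt; omega⟩
  invFun := ![![0,0],![0,1],![1,0],![1,1]]
  left_inv := by decide
  right_inv := by decide

lemma det_pt (f : ℕ → ℕ → ℂ) (hf : ∀ j k, 2 ≤ j ∨ 2 ≤ k → f j k = 0) :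
    (ptransposeFirst (Matrix.of fun v w => f (wt v) (wt w))).det = -(f 1 1)^4 := by
  rw [← Matrix.det_reindex_self E4 (ptransposeFirst (Matrix.of fun v w => f (wt v) (wt w)))]
  have hM : Matrix.reindex E4 E4 (ptransposeFirst (Matrix.of fun v w => f (wt v) (wt w)))
      = !![f 0 0, f 0 1, f 1 0, f 1 1;
           f 1 0, f 1 1, 0, 0;
           f 0 1, 0, f 1 1, 0;
           f 1 1, 0, 0, 0] := by
    ext i j
    fin_cases i <;> fin_cases j <;>
      simp [Matrix.reindex_apply, ptransposeFirst, E4, wt, Fin.sum_univ_two,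
        hf 0 2 (by omega), hf 1 2 (by omega), hf 2 0 (by omega), hf 2 1 (by omega),
        hf 2 2 (by omega), Matrix.vecHead, Matrix.vecTail]
  rw [hM]
  simp [Matrix.det_succ_row_zero, Fin.sum_univ_succ, Fin.succAbove,
    Matrix.vecHead, Matrix.vecTail]
  ring
end PsiWAux
namespace PsiWAux

lemma matEnt_one_one {N : ℕ} (hN : 3 ≤ N) (u : ℝ) :
    matEnt N u 1 1 = 1 / ((N : ℂ) * (1 + (N : ℂ) * (u : ℂ) ^ 2)) := by
  have hN0 : (0:ℝ) < N := by positivity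
  have ht : (0:ℝ) < 1 + N * u ^ 2 := by positivity
  have h2 : gW N u 2 = 0 := gW_eq_zero le_rfl
  have h1 : gW N u 1 * gW N u 1 = 1 / (N * (1 + N * u ^ 2)) := by
    unfold gW
    rw [if_neg one_ne_zero, if_pos rfl]
    rw [div_mul_div_comm, div_mul_div_comm, one_mul,
      Real.mul_self_sqrt hN0.le, Real.mul_self_sqrt ht.le, div_div]
  rw [matEnt, h2, ← Complex.ofReal_mul, h1]
  push_cast
  ring

lemma det_value {N : ℕ} (hN : 3 ≤ N) (u : ℝ) :
    (ptransposeFirst (Matrix.of fun v w => matEnt N u (wt v) (wt w))).det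
      = -(1 / ((N : ℂ) * (1 + (N : ℂ) * (u : ℂ) ^ 2)) ^ 4) := by
  rw [det_pt (matEnt N u) (fun j k h => matEnt_zero h), matEnt_one_one hN u]
  rw [div_pow, one_pow]

lemma det_re_neg {N : ℕ} (hN : 3 ≤ N) (u : ℝ) :
    (-(1 / ((N : ℂ) * (1 + (N : ℂ) * (u : ℂ) ^ 2)) ^ 4)).re < 0 := by
  have hN0 : (0:ℝ) < N := by positivity
  have ht : (0:ℝ) < N * (1 + N * u ^ 2) := by positivity
  have hcast : ((N : ℂ) * (1 + (N : ℂ) * (u : ℂ) ^ 2)) = ((N * (1 + N * u ^ 2) : ℝ) : ℂ) := by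
    push_cast; ring
  rw [hcast]
  have h2 : (-(1 / (((N * (1 + N * u ^ 2) : ℝ)) : ℂ) ^ 4))
      = (((-(1 / (N * (1 + N * u ^ 2)) ^ 4) : ℝ)) : ℂ) := by
    push_cast; ring
  rw [h2, Complex.ofReal_re]
  have : (0:ℝ) < 1 / ((N : ℝ) * (1 + N * u ^ 2)) ^ 4 := by positivity
  linarith

end PsiWAux
open scoped ComplexOrder

namespace PsiWAux

lemma proj_posSemidef {α : Type*} [Fintype α] [DecidableEq α] (v : α → ℂ) :
    (proj v).PosSemidef := by
  have h : proj v = (Matrix.of fun (_ : Fin 1) y => conj (v y)).conjTranspose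
      * (Matrix.of fun (_ : Fin 1) y => conj (v y)) := by
    ext x y
    simp [proj, Matrix.mul_apply, Matrix.conjTranspose_apply, Fin.sum_univ_one,
      mul_comm]
  rw [h]
  exact Matrix.posSemidef_conjTranspose_mul_self _

lemma sep_pt_psd {ρ : Matrix (Fin 2 → Fin 2) (Fin 2 → Fin 2) ℂ}
    (h : IsSeparableDensity ρ) : (ptransposeFirst ρ).PosSemidef := by
  obtain ⟨n, w, e, hw, -, -, rfl⟩ := h
  have hrep : ptransposeFirst (∑ m, (w m : ℂ) • proj (prodState (e m)))
      = ∑ m, proj (fun x : Fin 2 → Fin 2 =>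
          ((Real.sqrt (w m) : ℝ) : ℂ) * (conj (e m 0 (x 0)) * e m 1 (x 1))) := by
    ext v w'
    simp only [ptransposeFirst, Matrix.of_apply, Matrix.sum_apply, Matrix.smul_apply,
      proj, prodState, Fin.prod_univ_two, smul_eq_mul, map_mul, Complex.conj_conj,
      Complex.conj_ofReal, Matrix.cons_val_zero, Matrix.cons_val_one, Matrix.head_cons]
    refine Finset.sum_congr rfl fun m _ => ?_
    have hsq : ((Real.sqrt (w m) : ℝ) : ℂ) * ((Real.sqrt (w m) : ℝ) : ℂ) = ((w m : ℝ) : ℂ) := by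
      rw [← Complex.ofReal_mul, Real.mul_self_sqrt (hw m)]
    calc (w m : ℂ) * (e m 0 (w' 0) * e m 1 (v 1) * (conj (e m 0 (v 0)) * conj (e m 1 (w' 1))))
        = (((Real.sqrt (w m) : ℝ) : ℂ) * ((Real.sqrt (w m) : ℝ) : ℂ))
            * (e m 0 (w' 0) * e m 1 (v 1) * (conj (e m 0 (v 0)) * conj (e m 1 (w' 1)))) := by
          rw [hsq]
      _ = ((Real.sqrt (w m) : ℝ) : ℂ) * (conj (e m 0 (v 0)) * e m 1 (v 1))
            * (((Real.sqrt (w m) : ℝ) : ℂ) * (e m 0 (w' 0) * conj (e m 1 (w' 1)))) := by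
          ring
  rw [hrep]
  refine Finset.sum_induction _ _ (fun A B hA hB => hA.add hB) Matrix.PosSemidef.zero
    (fun m _ => proj_posSemidef _)

lemma psd_det_re_nonneg {α : Type*} [Fintype α] [DecidableEq α] {M : Matrix α α ℂ}
    (h : M.PosSemidef) : 0 ≤ M.det.re := by
  have h0 : (0:ℝ) ≤ ∏ i, h.1.eigenvalues i :=
    Finset.prod_nonneg fun i _ => h.eigenvalues_nonneg i
  rw [h.1.det_eq_prod_eigenvalues, ← RCLike.ofReal_prod]
  exact_mod_cast h0

end PsiWAux
namespace PsiWAux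

lemma transport {ι : Type*} [Fintype ι] [DecidableEq ι] (hι : Fintype.card ι = 2)
    (f : ℕ → ℕ → ℂ)
    (h : IsSeparableDensity (Matrix.of fun x y : ι → Fin 2 => f (wt x) (wt y))) :
    IsSeparableDensity (Matrix.of fun v w : Fin 2 → Fin 2 => f (wt v) (wt w)) := by
  obtain ⟨n, w, E, hw, hw1, hq, hrep⟩ := h
  set e := Fintype.equivFinOfCardEq hι with he
  refine ⟨n, w, fun m j => E m (e.symm j), hw, hw1, fun m j => hq m _, ?_⟩
  ext v w'
  have hwt : ∀ (v : Fin 2 → Fin 2), wt (fun i => v (e i)) = wt v := by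
    intro v
    exact Equiv.sum_comp e (fun j => ((v j : ℕ)))
  have h0 := congrFun (congrFun hrep (fun i => v (e i))) (fun i => w' (e i))
  simp only [Matrix.of_apply] at h0
  rw [hwt v, hwt w'] at h0
  have hps : ∀ (m : Fin n) (v : Fin 2 → Fin 2),
      prodState (E m) (fun i => v (e i)) = prodState (fun j => E m (e.symm j)) v := by
    intro m v
    unfold prodState
    rw [← Equiv.prod_comp e.symm (fun i => E m i (v (e i)))]
    refine Finset.prod_congr rfl fun j _ => ?_
    rw [Equiv.apply_symm_apply]
  show f (wt v) (wt w') = _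
  rw [h0]
  simp only [Matrix.sum_apply, Matrix.smul_apply, proj, Matrix.of_apply, smul_eq_mul]
  refine Finset.sum_congr rfl fun m _ => ?_
  rw [hps m v, hps m w']

end PsiWAux

/-- For every `N ≥ 3` and every `u ≥ 0`, the determinant of the partial
transpose (with respect to the first qubit) of the two-qubit reduced density matrix of
`ψ_N^{(1)}(u)` equals `-[N(1 + N u²)]⁻⁴`; in particular it is strictly negative, so this
reduced state is entangled and `ψ_N^{(1)}(u)` is robust with respect to the loss of any
`N - 2` qubits. -/
theorem psiW_det_ptranspose_neg {N : ℕ} (hN : 3 ≤ N) (u : ℝ) (hu : 0 ≤ u) :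
    (ptransposeFirst (rhoFirstTwo (psiW N u))).det
        = -(1 / ((N : ℂ) * (1 + (N : ℂ) * (u : ℂ) ^ 2)) ^ 4) ∧
    ((ptransposeFirst (rhoFirstTwo (psiW N u))).det).re < 0 ∧
    ¬ IsSeparableDensity (rhoFirstTwo (psiW N u)) ∧
    (∀ S : Finset (Fin N), S.card = N - 2 →
      ¬ IsSeparableDensity (reducedState (psiW N u) S)) := by
  classical
  have hrho := PsiWAux.rho_eq hN u
  have hdet : (ptransposeFirst (rhoFirstTwo (psiW N u))).det
      = -(1 / ((N : ℂ) * (1 + (N : ℂ) * (u : ℂ) ^ 2)) ^ 4) := by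
    rw [hrho]; exact PsiWAux.det_value hN u
  refine ⟨hdet, ?_, ?_, ?_⟩
  · rw [hdet]; exact PsiWAux.det_re_neg hN u
  · intro hsep
    have h1 := PsiWAux.psd_det_re_nonneg (PsiWAux.sep_pt_psd hsep)
    rw [hdet] at h1
    exact absurd h1 (not_le.mpr (PsiWAux.det_re_neg hN u))
  · intro S hS hsep
    rw [PsiWAux.reduced_eq hN u S hS] at hsep
    have hcard2 : Fintype.card {i : Fin N // i ∉ S} = 2 := by
      have h := Fintype.card_subtype_compl (fun i : Fin N => i ∈ S)
      have hcS : Fintype.card {i : Fin N // i ∈ S} = S.card := Fintype.card_coe S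
      have : Fintype.card {i : Fin N // i ∉ S} = Fintype.card (Fin N)
          - Fintype.card {i : Fin N // i ∈ S} := h
      rw [this, hcS, Fintype.card_fin, hS]
      omega
    have hsep2 := PsiWAux.transport hcard2 (PsiWAux.matEnt N u) hsep
    have h1 := PsiWAux.psd_det_re_nonneg (PsiWAux.sep_pt_psd hsep2)
    rw [PsiWAux.det_value hN u] at h1
    exact absurd h1 (not_le.mpr (PsiWAux.det_re_neg hN u))
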